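/- Let S be a finite singleton-rich semigroup and let s' ≪ s and t' ≪ t with (s')* ≠ (t')⁺. If ((s')⁺ s)* · t (t')* has (( (s')⁺ s)* t (t')*)⁺ = (t')⁺ (i.e. φ((s')⁺ s, t (t')*) = (t')⁺), then φ((s')⁺ s, t') = (t')⁺. Dually, if ψ((s')⁺ s, t (t')*) = (s')*, then ψ(s', t (t')*) = (s')*. -/
import Mathlib


open scoped Classical

/-- φ*(s): the idempotent right identities of `s`. -/
def rIds {S : Type*} [Mul S] (s : S) : Set S := {e | e * e = e ∧ s * e = s}

/-- φ⁺(s): the idempotent left identities of `s`. -/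
def lIds {S : Type*} [Mul S] (s : S) : Set S := {e | e * e = e ∧ e * s = s}

/-- `x` is the (necessarily unique) element of a singleton kernel (minimal ideal) of the
subsemigroup `T`: `{x}` is an ideal of `T`, hence the minimal ideal of `T`. -/
def IsKer {S : Type*} [Semigroup S] (T : Subsemigroup S) (x : S) : Prop :=
  x ∈ T ∧ ∀ a ∈ T, a * x = x ∧ x * a = x

/-- The natural partial order on idempotents: `e ≤ f` iff `ef = fe = e`. -/
def nle {S : Type*} [Mul S] (e f : S) : Prop := e * f = e ∧ f * e = e

/-- The relation `≪`: `s ≪ t` iff `s = s⁺ t s*`, where `sa s = s*` and `pl s = s⁺`. -/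
def ll {S : Type*} [Mul S] (sa pl : S → S) (s t : S) : Prop := s = pl s * t * sa s

/-- φ(x,y) = (x* y)⁺. -/
def phiF {S : Type*} [Mul S] (sa pl : S → S) (x y : S) : S := pl (sa x * y)

/-- ψ(x,y) = (x y⁺)*. -/
def psiF {S : Type*} [Mul S] (sa pl : S → S) (x y : S) : S := sa (x * pl y)

/-- The φ-sequence: `(s^φ₀, t^φ₀) = (s, t)`,
`s^φ_{i+1} = s^φ_i φ(s^φ_i, t^φ_i)`, `t^φ_{i+1} = (s^φ_i)* t^φ_i`. -/
def phiSeq {S : Type*} [Mul S] (sa pl : S → S) (s t : S) : ℕ → S × S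
  | 0 => (s, t)
  | i + 1 =>
      let p := phiSeq sa pl s t i
      (p.1 * phiF sa pl p.1 p.2, sa p.1 * p.2)

/-- The ψ-sequence: `(s^ψ₀, t^ψ₀) = (s, t)`,
`s^ψ_{i+1} = s^ψ_i (t^ψ_i)⁺`, `t^ψ_{i+1} = ψ(s^ψ_i, t^ψ_i) t^ψ_i`. -/
def psiSeq {S : Type*} [Mul S] (sa pl : S → S) (s t : S) : ℕ → S × S
  | 0 => (s, t)
  | i + 1 =>
      let p := psiSeq sa pl s t i
      (p.1 * pl p.2, psiF sa pl p.1 p.2 * p.2)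

/-- Let `s' ≪ s` and `t' ≪ t` with `(s')* ≠ (t')⁺`. If `φ((s')⁺ s, t (t')*) = (t')⁺` then
`φ((s')⁺ s, t') = (t')⁺`; dually, if `ψ((s')⁺ s, t (t')*) = (s')*` then
`ψ(s', t (t')*) = (s')*`. -/
theorem stmt17 {S : Type*} [Semigroup S] [Fintype S] (sa pl : S → S)
    (hsa : ∀ s : S, IsKer (Subsemigroup.closure (rIds s)) (sa s))
    (hpl : ∀ s : S, IsKer (Subsemigroup.closure (lIds s)) (pl s))
    (s s' t t' : S) (hs : ll sa pl s' s) (ht : ll sa pl t' t) (hne : sa s' ≠ pl t') :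
    (phiF sa pl (pl s' * s) (t * sa t') = pl t' → phiF sa pl (pl s' * s) t' = pl t') ∧
    (psiF sa pl (pl s' * s) (t * sa t') = sa s' → psiF sa pl s' (t * sa t') = sa s') := by
  constructor
  · intro h1
    simp only [phiF] at h1 ⊢
    have hzz : sa (pl s' * s) * sa (pl s' * s) = sa (pl s' * s) :=
      ((hsa (pl s' * s)).2 _ (hsa (pl s' * s)).1).1
    have hzmem : sa (pl s' * s) ∈
        Subsemigroup.closure (lIds (sa (pl s' * s) * (t * sa t'))) :=
      Subsemigroup.subset_closure ⟨hzz, by rw [← mul_assoc, hzz]⟩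
    have hze : sa (pl s' * s) * pl t' = pl t' := by
      have h := ((hpl (sa (pl s' * s) * (t * sa t'))).2 _ hzmem).1
      rwa [h1] at h
    have hzt : sa (pl s' * s) * t' = t' := by
      conv_lhs => rw [ht]
      rw [← mul_assoc, ← mul_assoc, hze]
      exact ht.symm
    rw [hzt]
  · intro h2
    simp only [psiF] at h2 ⊢
    have hqq : pl (t * sa t') * pl (t * sa t') = pl (t * sa t') :=
      ((hpl (t * sa t')).2 _ (hpl (t * sa t')).1).1
    have hqmem : pl (t * sa t') ∈
        Subsemigroup.closure (rIds ((pl s' * s) * pl (t * sa t'))) :=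
      Subsemigroup.subset_closure ⟨hqq, by rw [mul_assoc, hqq]⟩
    have hkq : sa s' * pl (t * sa t') = sa s' := by
      have h := ((hsa ((pl s' * s) * pl (t * sa t'))).2 _ hqmem).2
      rwa [h2] at h
    have hsq : s' * pl (t * sa t') = s' := by
      conv_lhs => rw [hs]
      rw [mul_assoc (pl s' * s), hkq]
      exact hs.symm
    rw [hsq]
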